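/- For 1 < α < 2, the improper integral ∫₀^∞ (1 − cos u)/u^α du equals −Γ(1−α)·sin(πα/2), and the improper integral ∫₀^∞ (sin u)/u^α du equals Γ(1−α)·cos(πα/2). -/

import Mathlib

open Filter Topology

open Filter Topology MeasureTheory Set Real

section helpers
variable {t : ℝ}

lemma intExp (ht : 0 < t) : IntegrableOn (fun u : ℝ => Real.exp (-(t*u))) (Ioi 0) := by
  have := exp_neg_integrableOn_Ioi 0 ht
  refine this.congr_fun (fun x _ => by dsimp only; rw [neg_mul]) measurableSet_Ioi

lemma expTendsto (ht : 0 < t) : Tendsto (fun u : ℝ => Real.exp (-(t*u))) atTop (𝓝 0) := by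
  have h : Tendsto (fun u : ℝ => t * u) atTop atTop := tendsto_id.const_mul_atTop ht
  have h2 := Real.tendsto_exp_atBot.comp (tendsto_neg_atTop_atBot.comp h)
  simpa [Function.comp_def] using h2

lemma hasDerivExpNeg (ht : 0 < t) (x : ℝ) :
    HasDerivAt (fun u : ℝ => Real.exp (-(t*u))) (Real.exp (-(t*x)) * (-t)) x := by
  have h1 : HasDerivAt (fun u : ℝ => -(t*u)) (-t) x := by
    simpa using ((hasDerivAt_id x).const_mul (-t)).congr_deriv (by ring)
  simpa using h1.exp

lemma L3 (ht : 0 < t) : ∫ u in Ioi (0:ℝ), Real.exp (-(t*u)) = 1/t := by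
  have := integral_Ioi_of_hasDerivAt_of_tendsto' (f := fun u : ℝ => -Real.exp (-(t*u))/t)
    (f' := fun u : ℝ => Real.exp (-(t*u))) (a := 0)
    (fun x _ => by
      have := ((hasDerivExpNeg ht x).neg).div_const t
      refine this.congr_deriv ?_
      field_simp)
    (intExp ht)
    (by simpa using ((expTendsto ht).neg.div_const t))
  rw [this]
  norm_num [neg_div]

lemma intExpTrig (ht : 0 < t) {h : ℝ → ℝ} (hm : Measurable h) (hb : ∀ u, |h u| ≤ 1) :
    IntegrableOn (fun u : ℝ => Real.exp (-(t*u)) * h u) (Ioi 0) := by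
  refine (intExp ht).mono' ?_ ?_
  · exact (measurable_exp.comp ((measurable_const.mul measurable_id).neg)).aestronglyMeasurable.mul
      hm.aestronglyMeasurable
  · refine Filter.Eventually.of_forall (fun u => ?_)
    rw [Real.norm_eq_abs, abs_mul, abs_of_pos (Real.exp_pos _)]
    calc Real.exp (-(t*u)) * |h u| ≤ Real.exp (-(t*u)) * 1 := by
          gcongr; exact hb u
      _ = _ := mul_one _

lemma L1 (ht : 0 < t) : ∫ u in Ioi (0:ℝ), Real.exp (-(t*u)) * Real.sin u = 1/(1+t^2) := by
  have ht2 : (0:ℝ) < 1 + t^2 := by positivity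
  have hD : ∀ x : ℝ, HasDerivAt (fun u : ℝ => -(Real.exp (-(t*u)) * (t * Real.sin u + Real.cos u)) / (1+t^2))
      (Real.exp (-(t*x)) * Real.sin x) x := by
    intro x
    have inner : HasDerivAt (fun u : ℝ => t * Real.sin u + Real.cos u)
        (t * Real.cos x + (-Real.sin x)) x :=
      ((Real.hasDerivAt_sin x).const_mul t).add (Real.hasDerivAt_cos x)
    have := (((hasDerivExpNeg ht x).mul inner).neg).div_const (1+t^2)
    refine this.congr_deriv ?_
    field_simp
    ring
  have hT : Tendsto (fun u : ℝ => -(Real.exp (-(t*u)) * (t * Real.sin u + Real.cos u)) / (1+t^2))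
      atTop (𝓝 0) := by
    apply squeeze_zero_norm (a := fun u => Real.exp (-(t*u)) * (t+1) / (1+t^2))
    · intro u
      rw [Real.norm_eq_abs, abs_div, abs_neg, abs_mul, abs_of_pos (Real.exp_pos _),
        abs_of_pos ht2]
      gcongr
      exact abs_le.2 ⟨by nlinarith [neg_one_le_sin u, neg_one_le_cos u, Real.sin_le_one u, Real.cos_le_one u],
        by nlinarith [neg_one_le_sin u, neg_one_le_cos u, Real.sin_le_one u, Real.cos_le_one u]⟩
    · simpa using (((expTendsto ht).mul_const (t+1)).div_const (1+t^2))
  have := integral_Ioi_of_hasDerivAt_of_tendsto' (a := 0) (fun x _ => hD x)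
    (intExpTrig ht Real.measurable_sin (fun u =>
      abs_le.2 ⟨neg_one_le_sin u, Real.sin_le_one u⟩)) hT
  rw [this]
  norm_num [neg_div]


lemma L2 (ht : 0 < t) : ∫ u in Ioi (0:ℝ), Real.exp (-(t*u)) * Real.cos u = t/(1+t^2) := by
  have ht2 : (0:ℝ) < 1 + t^2 := by positivity
  have hD : ∀ x : ℝ, HasDerivAt (fun u : ℝ => Real.exp (-(t*u)) * (Real.sin u - t * Real.cos u) / (1+t^2))
      (Real.exp (-(t*x)) * Real.cos x) x := by
    intro x
    have inner : HasDerivAt (fun u : ℝ => Real.sin u - t * Real.cos u)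
        (Real.cos x - t * (-Real.sin x)) x :=
      (Real.hasDerivAt_sin x).sub ((Real.hasDerivAt_cos x).const_mul t)
    have := ((hasDerivExpNeg ht x).mul inner).div_const (1+t^2)
    refine this.congr_deriv ?_
    field_simp
    ring
  have hT : Tendsto (fun u : ℝ => Real.exp (-(t*u)) * (Real.sin u - t * Real.cos u) / (1+t^2))
      atTop (𝓝 0) := by
    apply squeeze_zero_norm (a := fun u => Real.exp (-(t*u)) * (1+t) / (1+t^2))
    · intro u
      rw [Real.norm_eq_abs, abs_div, abs_mul, abs_of_pos (Real.exp_pos _), abs_of_pos ht2]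
      gcongr
      exact abs_le.2 ⟨by nlinarith [neg_one_le_sin u, neg_one_le_cos u, Real.sin_le_one u, Real.cos_le_one u],
        by nlinarith [neg_one_le_sin u, neg_one_le_cos u, Real.sin_le_one u, Real.cos_le_one u]⟩
    · simpa using (((expTendsto ht).mul_const (1+t)).div_const (1+t^2))
  have := integral_Ioi_of_hasDerivAt_of_tendsto' (a := 0) (fun x _ => hD x)
    (intExpTrig ht Real.measurable_cos (fun u =>
      abs_le.2 ⟨neg_one_le_cos u, Real.cos_le_one u⟩)) hT
  rw [this]
  norm_num [neg_div]

lemma L4 (ht : 0 < t) :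
    ∫ u in Ioi (0:ℝ), Real.exp (-(t*u)) * (1 - Real.cos u) = 1/(t*(1+t^2)) := by
  have hi1 := intExp ht
  have hi2 := intExpTrig ht Real.measurable_cos (fun u =>
      abs_le.2 ⟨neg_one_le_cos u, Real.cos_le_one u⟩)
  have : ∫ u in Ioi (0:ℝ), Real.exp (-(t*u)) * (1 - Real.cos u)
      = (∫ u in Ioi (0:ℝ), Real.exp (-(t*u))) - ∫ u in Ioi (0:ℝ), Real.exp (-(t*u)) * Real.cos u := by
    rw [← integral_sub hi1 hi2]
    congr 1 with u
    ring
  rw [this, L3 ht, L2 ht]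
  have ht2 : (0:ℝ) < 1 + t^2 := by positivity
  field_simp
  ring


lemma intJ {s : ℝ} (hs0 : 0 < s) (hs2 : s < 2) :
    IntegrableOn (fun t : ℝ => t ^ (s-1) / (1 + t^2)) (Ioi 0) := by
  have hm : Measurable (fun t : ℝ => t ^ (s-1) / (1 + t^2)) := by fun_prop
  rw [← Ioo_union_Ici_eq_Ioi (zero_lt_one)]
  apply IntegrableOn.union
  · refine Integrable.mono' ((intervalIntegral.integrableOn_Ioo_rpow_iff zero_lt_one).2
      (by linarith : (-1:ℝ) < s - 1)) hm.aestronglyMeasurable ?_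
    filter_upwards [ae_restrict_mem measurableSet_Ioo] with x hx
    rw [Real.norm_eq_abs, abs_div, abs_of_nonneg (Real.rpow_nonneg hx.1.le _),
      abs_of_pos (by positivity : (0:ℝ) < 1 + x^2)]
    rw [div_le_iff₀ (by positivity)]
    nlinarith [Real.rpow_nonneg hx.1.le (s-1), sq_nonneg x]
  · rw [integrableOn_Ici_iff_integrableOn_Ioi]
    refine Integrable.mono' (integrableOn_Ioi_rpow_of_lt (by linarith : s - 3 < -1) zero_lt_one)
      hm.aestronglyMeasurable ?_
    filter_upwards [ae_restrict_mem measurableSet_Ioi] with x hx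
    have hx0 : (0:ℝ) < x := lt_trans zero_lt_one hx
    rw [Real.norm_eq_abs, abs_div, abs_of_nonneg (Real.rpow_nonneg hx0.le _),
      abs_of_pos (by positivity : (0:ℝ) < 1 + x^2)]
    rw [div_le_iff₀ (by positivity)]
    have hxe : x ^ (s-3) * x^2 = x ^ (s-1) := by
      rw [← Real.rpow_natCast x 2, ← Real.rpow_add hx0]
      norm_num
      ring_nf
    nlinarith [Real.rpow_nonneg hx0.le (s-3)]

lemma Jlemma {s : ℝ} (hs0 : 0 < s) (hs2 : s < 2) :
    ∫ t in Ioi (0:ℝ), t ^ (s-1) / (1 + t^2) = π / (2 * Real.sin (π * s / 2)) := by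
  have hexp : ∀ t v : ℝ, Real.exp (-v) * Real.exp (-(v * t^2)) = Real.exp (-((1+t^2)*v)) := by
    intro t v; rw [← Real.exp_add]; ring_nf
  have hinner : ∀ t : ℝ, t ∈ Ioi (0:ℝ) →
      (∫ v in Ioi (0:ℝ), t ^ (s-1) * (Real.exp (-v) * Real.exp (-(v * t^2))))
        = t ^ (s-1) / (1 + t^2) := by
    intro t ht
    have ht2 : (0:ℝ) < 1 + t^2 := by positivity
    calc (∫ v in Ioi (0:ℝ), t ^ (s-1) * (Real.exp (-v) * Real.exp (-(v * t^2))))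
        = ∫ v in Ioi (0:ℝ), t ^ (s-1) * Real.exp (-((1+t^2)*v)) := by
          refine setIntegral_congr_fun measurableSet_Ioi (fun v _ => ?_)
          rw [hexp]
      _ = t ^ (s-1) * ∫ v in Ioi (0:ℝ), Real.exp (-((1+t^2)*v)) := integral_const_mul _ _
      _ = t ^ (s-1) / (1+t^2) := by rw [L3 ht2]; ring
  have hms : AEStronglyMeasurable
      (Function.uncurry fun t v : ℝ => t ^ (s-1) * (Real.exp (-v) * Real.exp (-(v * t^2))))
      ((volume.restrict (Ioi (0:ℝ))).prod (volume.restrict (Ioi (0:ℝ)))) := by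
    apply Measurable.aestronglyMeasurable
    show Measurable fun p : ℝ × ℝ => p.1 ^ (s-1) * (Real.exp (-p.2) * Real.exp (-(p.2 * p.1^2)))
    fun_prop
  have hint : Integrable
      (Function.uncurry fun t v : ℝ => t ^ (s-1) * (Real.exp (-v) * Real.exp (-(v * t^2))))
      ((volume.restrict (Ioi (0:ℝ))).prod (volume.restrict (Ioi (0:ℝ)))) := by
    rw [MeasureTheory.integrable_prod_iff hms]
    constructor
    · filter_upwards [ae_restrict_mem measurableSet_Ioi] with t ht
      have ht2 : (0:ℝ) < 1 + t^2 := by positivity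
      refine ((intExp ht2).const_mul (t ^ (s-1))).congr ?_
      exact Filter.Eventually.of_forall (fun v => by simp only [Function.uncurry]; rw [hexp])
    · refine (intJ hs0 hs2).congr ?_
      filter_upwards [ae_restrict_mem measurableSet_Ioi] with t ht
      have ht0 : (0:ℝ) < t := ht
      rw [← hinner t ht]
      refine (setIntegral_congr_fun measurableSet_Ioi (fun v hv => ?_)).symm
      simp only [Function.uncurry]
      rw [Real.norm_eq_abs, abs_of_nonneg]
      positivity
  have h2r : ∀ x : ℝ, 0 ≤ x → x ^ (2:ℝ) = x^2 := fun x hx => by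
    rw [show (2:ℝ) = ((2:ℕ):ℝ) by norm_num, Real.rpow_natCast]
  calc (∫ t in Ioi (0:ℝ), t ^ (s-1) / (1 + t^2))
      = ∫ t in Ioi (0:ℝ), (∫ v in Ioi (0:ℝ), t ^ (s-1) * (Real.exp (-v) * Real.exp (-(v * t^2)))) := by
        exact (setIntegral_congr_fun measurableSet_Ioi (fun t ht => hinner t ht)).symm
    _ = ∫ v in Ioi (0:ℝ), (∫ t in Ioi (0:ℝ), t ^ (s-1) * (Real.exp (-v) * Real.exp (-(v * t^2)))) :=
        MeasureTheory.integral_integral_swap hint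
    _ = ∫ v in Ioi (0:ℝ), Real.exp (-v) * (v ^ (-(s - 1 + 1) / 2) * (1/2) * Real.Gamma ((s - 1 + 1)/2)) := by
        refine setIntegral_congr_fun measurableSet_Ioi (fun v hv => ?_)
        have hv0 : (0:ℝ) < v := hv
        have : (∫ t in Ioi (0:ℝ), t ^ (s-1) * (Real.exp (-v) * Real.exp (-(v * t^2))))
            = Real.exp (-v) * ∫ t in Ioi (0:ℝ), t ^ (s-1) * Real.exp (-v * t ^ (2:ℝ)) := by
          rw [← integral_const_mul]
          refine setIntegral_congr_fun measurableSet_Ioi (fun t ht => ?_)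
          rw [h2r t (le_of_lt ht), neg_mul]
          ring
        rw [this, integral_rpow_mul_exp_neg_mul_rpow two_pos (by linarith : (-1:ℝ) < s - 1) hv0]
    _ = (∫ v in Ioi (0:ℝ), v ^ ((1 - s/2) - 1) * Real.exp (-(1*v))) * ((1/2) * Real.Gamma (s/2)) := by
        rw [← integral_mul_const]
        refine setIntegral_congr_fun measurableSet_Ioi (fun v hv => ?_)
        rw [show (1 - s/2) - 1 = -(s/2) by ring, show s - 1 + 1 = s by ring, one_mul,
          show -s/2 = -(s/2) by ring]
        ring
    _ = Real.Gamma (1 - s/2) * ((1/2) * Real.Gamma (s/2)) := by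
        rw [integral_rpow_mul_exp_neg_mul_Ioi (by linarith : (0:ℝ) < 1 - s/2) one_pos]
        norm_num
    _ = π / (2 * Real.sin (π * s / 2)) := by
        have hrefl := Real.Gamma_mul_Gamma_one_sub (s/2)
        rw [show Real.Gamma (1 - s/2) * ((1/2) * Real.Gamma (s/2))
            = (Real.Gamma (s/2) * Real.Gamma (1 - s/2))/2 by ring, hrefl,
          show π * (s/2) = π * s / 2 by ring, div_div, mul_comm]

lemma gammaKernelInt {α : ℝ} (hα : 0 < α) {u : ℝ} (hu : 0 < u) :
    IntegrableOn (fun t : ℝ => t ^ (α-1) * Real.exp (-(u*t))) (Ioi 0) := by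
  have := integrableOn_rpow_mul_exp_neg_mul_rpow (by linarith : (-1:ℝ) < α - 1) one_pos hu
  refine this.congr_fun (fun t ht => ?_) measurableSet_Ioi
  dsimp only
  rw [Real.rpow_one, neg_mul]

lemma fubini_key {α : ℝ} (hα1 : 1 < α) (hα2 : α < 2) {h I : ℝ → ℝ} (hm : Measurable h)
    (hb : ∀ u : ℝ, 0 ≤ u → |h u| ≤ 2 * min u 1)
    (hI : ∀ t : ℝ, 0 < t → (∫ u in Ioi (0:ℝ), Real.exp (-(t*u)) * h u) = I t) :
    IntegrableOn (fun u : ℝ => h u / u ^ α) (Ioi (0:ℝ)) ∧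
    Real.Gamma α * ∫ u in Ioi (0:ℝ), h u / u ^ α = ∫ t in Ioi (0:ℝ), t ^ (α-1) * I t := by
  have hα0 : (0:ℝ) < α := by linarith
  have hmg : Measurable (fun u : ℝ => h u / u ^ α) := by fun_prop
  -- integrability of h u / u ^ α
  have hint : IntegrableOn (fun u : ℝ => h u / u ^ α) (Ioi (0:ℝ)) := by
    rw [← Ioo_union_Ici_eq_Ioi (zero_lt_one)]
    apply IntegrableOn.union
    · refine Integrable.mono' (((intervalIntegral.integrableOn_Ioo_rpow_iff zero_lt_one).2
        (by linarith : (-1:ℝ) < 1 - α)).const_mul 2) hmg.aestronglyMeasurable ?_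
      filter_upwards [ae_restrict_mem measurableSet_Ioo] with x hx
      have hx0 : (0:ℝ) < x := hx.1
      rw [Real.norm_eq_abs, abs_div, abs_of_pos (Real.rpow_pos_of_pos hx0 _)]
      rw [div_le_iff₀ (Real.rpow_pos_of_pos hx0 _)]
      calc |h x| ≤ 2 * min x 1 := hb x hx0.le
        _ = 2 * x := by rw [min_eq_left hx.2.le]
        _ = 2 * x ^ (1-α) * x ^ α := by
            rw [mul_assoc, ← Real.rpow_add hx0]; norm_num
    · rw [integrableOn_Ici_iff_integrableOn_Ioi]
      refine Integrable.mono' ((integrableOn_Ioi_rpow_of_lt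
        (by linarith : -α < -1) zero_lt_one).const_mul 2) hmg.aestronglyMeasurable ?_
      filter_upwards [ae_restrict_mem measurableSet_Ioi] with x hx
      have hx0 : (0:ℝ) < x := lt_trans zero_lt_one hx
      rw [Real.norm_eq_abs, abs_div, abs_of_pos (Real.rpow_pos_of_pos hx0 _)]
      rw [div_le_iff₀ (Real.rpow_pos_of_pos hx0 _)]
      calc |h x| ≤ 2 * min x 1 := hb x hx0.le
        _ = 2 * 1 := by rw [min_eq_right hx.le]
        _ ≤ 2 * (x ^ (-α) * x ^ α) := by rw [← Real.rpow_add hx0]; norm_num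
        _ = 2 * x ^ (-α) * x ^ α := by ring
  refine ⟨hint, ?_⟩
  have hGpos : 0 < Real.Gamma α := Real.Gamma_pos_of_pos hα0
  -- auxiliary: value of the inner Gamma integral
  have hgam : ∀ u : ℝ, 0 < u →
      (∫ t in Ioi (0:ℝ), t ^ (α-1) * Real.exp (-(u*t))) = (u ^ α)⁻¹ * Real.Gamma α := by
    intro u hu
    rw [integral_rpow_mul_exp_neg_mul_Ioi hα0 hu, one_div, Real.inv_rpow hu.le]
  -- absolute integrability of |h u| / u ^ α
  have habs : IntegrableOn (fun u : ℝ => |h u| / u ^ α) (Ioi (0:ℝ)) := by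
    refine hint.abs.congr ?_
    filter_upwards [ae_restrict_mem measurableSet_Ioi] with u hu
    have hu0 : (0:ℝ) < u := hu
    rw [abs_div, abs_of_pos (Real.rpow_pos_of_pos hu0 _)]
  have hms : AEStronglyMeasurable
      (Function.uncurry fun u t : ℝ => h u * (t ^ (α-1) * Real.exp (-(u*t))))
      ((volume.restrict (Ioi (0:ℝ))).prod (volume.restrict (Ioi (0:ℝ)))) := by
    apply Measurable.aestronglyMeasurable
    show Measurable fun p : ℝ × ℝ => h p.1 * (p.2 ^ (α-1) * Real.exp (-(p.1*p.2)))
    fun_prop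
  have hK : Integrable
      (Function.uncurry fun u t : ℝ => h u * (t ^ (α-1) * Real.exp (-(u*t))))
      ((volume.restrict (Ioi (0:ℝ))).prod (volume.restrict (Ioi (0:ℝ)))) := by
    rw [MeasureTheory.integrable_prod_iff hms]
    constructor
    · filter_upwards [ae_restrict_mem measurableSet_Ioi] with u hu
      have hu0 : (0:ℝ) < u := hu
      exact (gammaKernelInt hα0 hu0).const_mul (h u)
    · refine ((habs.mul_const (Real.Gamma α)).congr ?_)
      filter_upwards [ae_restrict_mem measurableSet_Ioi] with u hu
      have hu0 : (0:ℝ) < u := hu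
      have : (∫ t in Ioi (0:ℝ), ‖h u * (t ^ (α-1) * Real.exp (-(u*t)))‖)
          = |h u| * ((u ^ α)⁻¹ * Real.Gamma α) := by
        rw [← hgam u hu0, ← integral_const_mul]
        refine setIntegral_congr_fun measurableSet_Ioi (fun t ht => ?_)
        have ht0 : (0:ℝ) < t := ht
        rw [Real.norm_eq_abs, abs_mul, abs_of_nonneg (by positivity :
          (0:ℝ) ≤ t ^ (α-1) * Real.exp (-(u*t)))]
      simp only [Function.uncurry] at this ⊢
      rw [this, div_eq_mul_inv]
      ring
  calc Real.Gamma α * ∫ u in Ioi (0:ℝ), h u / u ^ α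
      = ∫ u in Ioi (0:ℝ), Real.Gamma α * (h u / u ^ α) := (integral_const_mul _ _).symm
    _ = ∫ u in Ioi (0:ℝ), (∫ t in Ioi (0:ℝ), h u * (t ^ (α-1) * Real.exp (-(u*t)))) := by
        refine setIntegral_congr_fun measurableSet_Ioi (fun u hu => ?_)
        have hu0 : (0:ℝ) < u := hu
        rw [integral_const_mul, hgam u hu0, div_eq_mul_inv]
        ring
    _ = ∫ t in Ioi (0:ℝ), (∫ u in Ioi (0:ℝ), h u * (t ^ (α-1) * Real.exp (-(u*t)))) :=
        MeasureTheory.integral_integral_swap hK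
    _ = ∫ t in Ioi (0:ℝ), t ^ (α-1) * I t := by
        refine setIntegral_congr_fun measurableSet_Ioi (fun t ht => ?_)
        have ht0 : (0:ℝ) < t := ht
        rw [← hI t ht0, ← integral_const_mul]
        refine setIntegral_congr_fun measurableSet_Ioi (fun u hu => ?_)
        rw [mul_comm u t]
        ring

theorem stmt1' (α : ℝ) (hα : 1 < α) (hα2 : α < 2) :
    Tendsto (fun T : ℝ => ∫ u in (0:ℝ)..T, (1 - Real.cos u) / u ^ α) atTop
      (𝓝 (-(Real.Gamma (1 - α) * Real.sin (Real.pi * α / 2)))) ∧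
    Tendsto (fun T : ℝ => ∫ u in (0:ℝ)..T, Real.sin u / u ^ α) atTop
      (𝓝 (Real.Gamma (1 - α) * Real.cos (Real.pi * α / 2))) := by
  have hα0 : (0:ℝ) < α := by linarith
  have hGpos : 0 < Real.Gamma α := Real.Gamma_pos_of_pos hα0
  have hbsin : ∀ u : ℝ, 0 ≤ u → |Real.sin u| ≤ 2 * min u 1 := by
    intro u hu
    have h1 : |Real.sin u| ≤ min u 1 := le_min
      (by simpa [abs_of_nonneg hu] using Real.abs_sin_le_abs (x := u))
      (abs_le.2 ⟨Real.neg_one_le_sin u, Real.sin_le_one u⟩)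
    have h2 : (0:ℝ) ≤ min u 1 := le_min hu zero_le_one
    linarith
  have hbcos : ∀ u : ℝ, 0 ≤ u → |1 - Real.cos u| ≤ 2 * min u 1 := by
    intro u hu
    have h0 : 0 ≤ 1 - Real.cos u := by linarith [Real.cos_le_one u]
    rw [abs_of_nonneg h0]
    rcases le_total u 1 with h | h
    · rw [min_eq_left h]
      nlinarith [Real.one_sub_sq_div_two_le_cos (x := u)]
    · rw [min_eq_right h]
      nlinarith [Real.neg_one_le_cos u]
  obtain ⟨hint2, hkey2⟩ := fubini_key (h := Real.sin) (I := fun t => 1/(1+t^2)) hα hα2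
    Real.measurable_sin hbsin (fun t ht => L1 ht)
  obtain ⟨hint1, hkey1⟩ := fubini_key (h := fun u => 1 - Real.cos u)
    (I := fun t => 1/(t*(1+t^2))) hα hα2 (by fun_prop) hbcos (fun t ht => L4 ht)
  -- simplify the right-hand sides
  have hrhs2 : (∫ t in Ioi (0:ℝ), t ^ (α-1) * (1/(1+t^2))) = π / (2 * Real.sin (π * α / 2)) := by
    rw [← Jlemma hα0 hα2]
    exact setIntegral_congr_fun measurableSet_Ioi (fun t ht => by rw [mul_one_div])
  have hrhs1 : (∫ t in Ioi (0:ℝ), t ^ (α-1) * (1/(t*(1+t^2))))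
      = π / (2 * Real.sin (π * (α-1) / 2)) := by
    rw [← Jlemma (by linarith : (0:ℝ) < α - 1) (by linarith : α - 1 < 2)]
    refine setIntegral_congr_fun measurableSet_Ioi (fun t ht => ?_)
    have ht0 : (0:ℝ) < t := ht
    rw [Real.rpow_sub ht0 (α-1) 1, Real.rpow_one, div_div, mul_one_div]
  rw [hrhs2] at hkey2
  rw [hrhs1] at hkey1
  have hs : 0 < Real.sin (π * α / 2) :=
    Real.sin_pos_of_pos_of_lt_pi (by nlinarith [Real.pi_pos]) (by nlinarith [Real.pi_pos])
  have hc : Real.cos (π * α / 2) < 0 :=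
    Real.cos_neg_of_pi_div_two_lt_of_lt (by nlinarith [Real.pi_pos]) (by nlinarith [Real.pi_pos])
  have hrefl := Real.Gamma_mul_Gamma_one_sub α
  have hsin2 : Real.sin (π * α) = 2 * Real.sin (π * α / 2) * Real.cos (π * α / 2) := by
    rw [← Real.sin_two_mul]
    congr 1
    ring
  have hsin_sub : Real.sin (π * (α-1) / 2) = -Real.cos (π * α / 2) := by
    rw [show π * (α-1) / 2 = π * α / 2 - π / 2 by ring, Real.sin_sub_pi_div_two]
  have hsne := hs.ne'
  have hcne := hc.ne
  have val2 : (∫ u in Ioi (0:ℝ), Real.sin u / u ^ α)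
      = Real.Gamma (1 - α) * Real.cos (π * α / 2) := by
    apply mul_left_cancel₀ hGpos.ne'
    rw [hkey2, show Real.Gamma α * (Real.Gamma (1 - α) * Real.cos (π * α / 2))
      = Real.Gamma α * Real.Gamma (1 - α) * Real.cos (π * α / 2) by ring, hrefl, hsin2]
    field_simp
  have val1 : (∫ u in Ioi (0:ℝ), (1 - Real.cos u) / u ^ α)
      = -(Real.Gamma (1 - α) * Real.sin (π * α / 2)) := by
    apply mul_left_cancel₀ hGpos.ne'
    rw [hkey1, hsin_sub, show Real.Gamma α * -(Real.Gamma (1 - α) * Real.sin (π * α / 2))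
      = -(Real.Gamma α * Real.Gamma (1 - α) * Real.sin (π * α / 2)) by ring, hrefl, hsin2]
    field_simp
  constructor
  · have ht := MeasureTheory.intervalIntegral_tendsto_integral_Ioi 0 hint1 tendsto_id
    rw [val1] at ht
    exact ht
  · have ht := MeasureTheory.intervalIntegral_tendsto_integral_Ioi 0 hint2 tendsto_id
    rw [val2] at ht
    exact ht
end helpers

/-- For `1 < α < 2`: `∫₀^∞ (1 − cos u)/u^α du = −Γ(1−α) sin(πα/2)` and
`∫₀^∞ (sin u)/u^α du = Γ(1−α) cos(πα/2)`, as improper Riemann integrals. -/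
theorem stmt1 (α : ℝ) (hα : 1 < α) (hα2 : α < 2) :
    Tendsto (fun T : ℝ => ∫ u in (0:ℝ)..T, (1 - Real.cos u) / u ^ α) atTop
      (𝓝 (-(Real.Gamma (1 - α) * Real.sin (Real.pi * α / 2)))) ∧
    Tendsto (fun T : ℝ => ∫ u in (0:ℝ)..T, Real.sin u / u ^ α) atTop
      (𝓝 (Real.Gamma (1 - α) * Real.cos (Real.pi * α / 2))) :=
  stmt1' α hα hα2
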